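/- Let (X, d) be a proper geodesic metric space and φ : X → ℝ a c-concave function which is Lipschitz on bounded sets. Then for every x ∈ X the c-superdifferential ∂^cφ(x) := { y : φ(x) + φ^c(y) = d(x,y)²/2 } is nonempty, and moreover every y ∈ ∂^cφ(x) satisfies d(x, y) ≤ Lip(φ|_{B₁(x)}) + 1/2. -/

import Mathlib

/-- The `c`-transform with cost `c(x,y) = d(x,y)²/2`. -/
noncomputable def cTransform {X : Type*} [MetricSpace X] (ψ : X → EReal) : X → EReal :=
  fun y => ⨅ x : X, (((dist x y) ^ 2 / 2 : ℝ) : EReal) - ψ x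

theorem statement7 {X : Type*} [MetricSpace X] [ProperSpace X]
    (hgeo : ∀ x y : X, ∃ g : ℝ → X, g 0 = x ∧ g 1 = y ∧
      ∀ s ∈ Set.Icc (0:ℝ) 1, ∀ t ∈ Set.Icc (0:ℝ) 1, dist (g s) (g t) = |s - t| * dist x y)
    (φ : X → ℝ)
    (hconc : cTransform (cTransform (fun x : X => (φ x : EReal))) = fun x : X => (φ x : EReal))
    (hlip : ∀ (x : X) (r : ℝ), ∃ K : NNReal, LipschitzOnWith K φ (Metric.closedBall x r)) :
    ∀ x : X,
      (∃ y : X, (φ x : EReal) + cTransform (fun z : X => (φ z : EReal)) y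
          = (((dist x y) ^ 2 / 2 : ℝ) : EReal)) ∧
      ∀ K : NNReal, LipschitzOnWith K φ (Metric.ball x 1) →
        ∀ y : X, (φ x : EReal) + cTransform (fun z : X => (φ z : EReal)) y
            = (((dist x y) ^ 2 / 2 : ℝ) : EReal) →
          dist x y ≤ (K : ℝ) + 1 / 2 := by
  intro x
  set ψ : X → EReal := cTransform (fun z : X => (φ z : EReal)) with hψdef
  have hψ_eq : ∀ y : X, ψ y = ⨅ z : X, ((dist z y ^ 2 / 2 - φ z : ℝ) : EReal) := by
    intro y
    rw [hψdef]
    simp only [cTransform, ← EReal.coe_sub]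
  have hψle : ∀ y z : X, ψ y ≤ ((dist z y ^ 2 / 2 - φ z : ℝ) : EReal) := by
    intro y z
    rw [hψ_eq]
    exact iInf_le _ z
  have hψ_ne_top : ∀ y : X, ψ y ≠ ⊤ := fun y =>
    (lt_of_le_of_lt (hψle y y) (EReal.coe_lt_top _)).ne
  have hinf : (⨅ y : X, (((dist y x) ^ 2 / 2 : ℝ) : EReal) - ψ y) = (φ x : EReal) :=
    congrFun hconc x
  have hφle : ∀ y : X, (φ x : EReal) ≤ (((dist x y) ^ 2 / 2 : ℝ) : EReal) - ψ y := by
    intro y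
    rw [dist_comm x y, ← hinf]
    exact iInf_le _ y
  -- From a near-minimality inequality, extract the real "star" inequality.
  have extract : ∀ (y : X) (ε : ℝ),
      (((dist x y) ^ 2 / 2 : ℝ) : EReal) - ψ y ≤ ((φ x + ε : ℝ) : EReal) →
      ∀ z : X, φ z - φ x ≤ dist z y ^ 2 / 2 - dist x y ^ 2 / 2 + ε := by
    intro y ε h z
    have hne_bot : ψ y ≠ ⊥ := by
      intro hb
      rw [hb, EReal.coe_sub_bot] at h
      exact (EReal.coe_lt_top _).not_ge h
    obtain ⟨p, hp⟩ : ∃ p : ℝ, ψ y = (p : EReal) :=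
      ⟨(ψ y).toReal, (EReal.coe_toReal (hψ_ne_top y) hne_bot).symm⟩
    rw [hp, ← EReal.coe_sub] at h
    have h' : dist x y ^ 2 / 2 - p ≤ φ x + ε := EReal.coe_le_coe_iff.mp h
    have h2 : p ≤ dist z y ^ 2 / 2 - φ z := by
      have := hψle y z
      rw [hp] at this
      exact EReal.coe_le_coe_iff.mp this
    linarith
  -- The key geometric estimate.
  have key : ∀ K : NNReal, LipschitzOnWith K φ (Metric.ball x 1) →
      ∀ ε : ℝ, 0 ≤ ε → ε ≤ 1/8 →
      ∀ y : X, (∀ z : X, φ z - φ x ≤ dist z y ^ 2 / 2 - dist x y ^ 2 / 2 + ε) →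
      dist x y ≤ (K : ℝ) + 1/2 := by
    intro K hK ε hε0 hε8 y hstar
    set d := dist x y with hd
    by_cases hsmall : d ≤ 1/2
    · have : (0:ℝ) ≤ K := K.coe_nonneg
      linarith
    push_neg at hsmall
    obtain ⟨g, hg0, hg1, hgd⟩ := hgeo x y
    have hdpos : 0 < d := by linarith
    set s : ℝ := 1 / (2 * d) with hs
    have hs0 : 0 < s := by positivity
    have hs1 : s ≤ 1 := by
      rw [hs, div_le_one (by linarith)]
      linarith
    have hsmem : s ∈ Set.Icc (0:ℝ) 1 := ⟨hs0.le, hs1⟩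
    have h0mem : (0:ℝ) ∈ Set.Icc (0:ℝ) 1 := by norm_num
    have h1mem : (1:ℝ) ∈ Set.Icc (0:ℝ) 1 := by norm_num
    have hsd : s * d = 1/2 := by
      rw [hs]
      field_simp
    have hxz : dist x (g s) = 1/2 := by
      have h := hgd 0 h0mem s hsmem
      rw [hg0, zero_sub, abs_neg, abs_of_nonneg hs0.le] at h
      rw [h, ← hd, hsd]
    have hzy : dist (g s) y = d - 1/2 := by
      have h := hgd s hsmem 1 h1mem
      rw [hg1, abs_of_nonpos (by linarith : s - 1 ≤ 0)] at h
      rw [h, ← hd]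
      linear_combination -hsd
    have hzball : g s ∈ Metric.ball x 1 := by
      rw [Metric.mem_ball, dist_comm, hxz]
      norm_num
    have hxball : x ∈ Metric.ball x 1 := Metric.mem_ball_self one_pos
    have hlipzx : dist (φ (g s)) (φ x) ≤ (K : ℝ) * (1/2) := by
      have h := hK.dist_le_mul (g s) hzball x hxball
      rw [dist_comm (g s) x, hxz] at h
      exact h
    rw [Real.dist_eq] at hlipzx
    have h1 := hstar (g s)
    rw [hzy] at h1
    have habs := abs_le.mp hlipzx
    nlinarith [habs.1, habs.2]
  refine ⟨?_, ?_⟩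
  · -- existence of a point in the c-superdifferential
    obtain ⟨K₀, hK₀⟩ := hlip x 1
    have hK₀' : LipschitzOnWith K₀ φ (Metric.ball x 1) :=
      hK₀.mono Metric.ball_subset_closedBall
    have hseq : ∀ n : ℕ, ∃ y : X,
        (((dist x y) ^ 2 / 2 : ℝ) : EReal) - ψ y
          ≤ ((φ x + 1/8 * (1 / ((n : ℝ) + 1)) : ℝ) : EReal) := by
      intro n
      have hpos : (0:ℝ) < 1/8 * (1 / ((n : ℝ) + 1)) := by positivity
      have hlt : (φ x : EReal) < ((φ x + 1/8 * (1 / ((n : ℝ) + 1)) : ℝ) : EReal) := by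
        rw [EReal.coe_lt_coe_iff]
        linarith
      rw [← hinf] at hlt
      obtain ⟨y, hy⟩ := iInf_lt_iff.mp hlt
      refine ⟨y, ?_⟩
      rw [dist_comm x y]
      exact hy.le
    choose u hu using hseq
    have hustar : ∀ n : ℕ, ∀ z : X,
        φ z - φ x ≤ dist z (u n) ^ 2 / 2 - dist x (u n) ^ 2 / 2
          + 1/8 * (1 / ((n : ℝ) + 1)) :=
      fun n => extract (u n) _ (hu n)
    have hub : ∀ n : ℕ, dist x (u n) ≤ (K₀ : ℝ) + 1/2 := by
      intro n
      refine key K₀ hK₀' _ (by positivity) ?_ (u n) (hustar n)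
      have h1 : (1:ℝ) ≤ (n : ℝ) + 1 := by
        have : (0:ℝ) ≤ (n : ℝ) := Nat.cast_nonneg n
        linarith
      have h2 : (1:ℝ) / ((n : ℝ) + 1) ≤ 1 := by
        rw [div_le_one (by linarith)]
        exact h1
      linarith
    have hu_mem : ∀ n : ℕ, u n ∈ Metric.closedBall x ((K₀ : ℝ) + 1/2) := by
      intro n
      rw [Metric.mem_closedBall, dist_comm]
      exact hub n
    obtain ⟨y₀, hy₀mem, σ, hσmono, hσtend⟩ :=
      (isCompact_closedBall x ((K₀ : ℝ) + 1/2)).tendsto_subseq hu_mem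
    -- pass to the limit in the star inequality
    have hstar₀ : ∀ z : X, φ z - φ x ≤ dist z y₀ ^ 2 / 2 - dist x y₀ ^ 2 / 2 := by
      intro z
      have hA : Filter.Tendsto (fun k => dist z (u (σ k))) Filter.atTop (nhds (dist z y₀)) :=
        Filter.Tendsto.dist tendsto_const_nhds hσtend
      have hB : Filter.Tendsto (fun k => dist x (u (σ k))) Filter.atTop (nhds (dist x y₀)) :=
        Filter.Tendsto.dist tendsto_const_nhds hσtend
      have hC : Filter.Tendsto (fun k => (1:ℝ)/8 * (1 / ((σ k : ℝ) + 1)))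
          Filter.atTop (nhds 0) := by
        have h0 : Filter.Tendsto (fun n : ℕ => (1:ℝ)/8 * (1 / ((n : ℝ) + 1)))
            Filter.atTop (nhds 0) := by
          have := tendsto_one_div_add_atTop_nhds_zero_nat (𝕜 := ℝ)
          have h := this.const_mul ((1:ℝ)/8)
          simpa using h
        exact h0.comp hσmono.tendsto_atTop
      have hlim : Filter.Tendsto
          (fun k => dist z (u (σ k)) ^ 2 / 2 - dist x (u (σ k)) ^ 2 / 2
            + 1/8 * (1 / ((σ k : ℝ) + 1)))
          Filter.atTop
          (nhds (dist z y₀ ^ 2 / 2 - dist x y₀ ^ 2 / 2 + 0)) := by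
        exact (((hA.pow 2).div_const 2).sub ((hB.pow 2).div_const 2)).add hC
      rw [add_zero] at hlim
      exact ge_of_tendsto' hlim fun k => hustar (σ k) z
    have hψge : ((dist x y₀ ^ 2 / 2 - φ x : ℝ) : EReal) ≤ ψ y₀ := by
      rw [hψ_eq]
      refine le_iInf fun z => ?_
      rw [EReal.coe_le_coe_iff]
      have := hstar₀ z
      linarith
    have hFle : (((dist x y₀) ^ 2 / 2 : ℝ) : EReal) - ψ y₀ ≤ (φ x : EReal) := by
      calc (((dist x y₀) ^ 2 / 2 : ℝ) : EReal) - ψ y₀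
          ≤ (((dist x y₀) ^ 2 / 2 : ℝ) : EReal)
              - ((dist x y₀ ^ 2 / 2 - φ x : ℝ) : EReal) :=
            EReal.sub_le_sub le_rfl hψge
        _ = (φ x : EReal) := by
            rw [← EReal.coe_sub]
            norm_num
    have hFeq : (((dist x y₀) ^ 2 / 2 : ℝ) : EReal) - ψ y₀ = (φ x : EReal) :=
      le_antisymm hFle (hφle y₀)
    have hne_bot : ψ y₀ ≠ ⊥ := by
      intro hb
      rw [hb, EReal.coe_sub_bot] at hFeq
      exact (EReal.coe_ne_top (φ x)) hFeq.symm
    obtain ⟨p, hp⟩ : ∃ p : ℝ, ψ y₀ = (p : EReal) :=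
      ⟨(ψ y₀).toReal, (EReal.coe_toReal (hψ_ne_top y₀) hne_bot).symm⟩
    rw [hp, ← EReal.coe_sub] at hFeq
    have hreal : dist x y₀ ^ 2 / 2 - p = φ x := EReal.coe_eq_coe_iff.mp hFeq
    refine ⟨y₀, ?_⟩
    rw [hp, ← EReal.coe_add, EReal.coe_eq_coe_iff]
    linarith
  · -- the distance bound
    intro K hK y heq
    have hne_bot : ψ y ≠ ⊥ := by
      intro hb
      rw [hb, EReal.add_bot] at heq
      exact (EReal.coe_ne_bot _) heq.symm
    obtain ⟨p, hp⟩ : ∃ p : ℝ, ψ y = (p : EReal) :=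
      ⟨(ψ y).toReal, (EReal.coe_toReal (hψ_ne_top y) hne_bot).symm⟩
    rw [hp, ← EReal.coe_add] at heq
    have hreal : φ x + p = dist x y ^ 2 / 2 := EReal.coe_eq_coe_iff.mp heq
    refine key K hK 0 le_rfl (by norm_num) y ?_
    intro z
    have h2 : p ≤ dist z y ^ 2 / 2 - φ z := by
      have := hψle y z
      rw [hp] at this
      exact EReal.coe_le_coe_iff.mp this
    linarith
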